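/- Let N ≥ 1 and let P be the irreducible birth-and-death stochastic matrix on I = {0,1,…,N} with parameters p_x = P(x,x+1), q_x = P(x,x−1), r_x = P(x,x) (p_x + q_x + r_x = 1, q_0 = 0 = p_N, p_x > 0 for x < N, q_x > 0 for x ≥ 1, tridiagonal). Let π be a vector with strictly positive entries satisfying detailed balance: π(x)·P(x,y) = π(y)·P(y,x) for all x,y. If the symmetric matrix S defined by S(x,y) := π(x)·P(x,y) is positive semidefinite (equivalently, all eigenvalues of P are nonnegative), then P is monotone: p_x + q_{x+1} ≤ 1 for all x ∈ {0,…,N−1}. -/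

import Mathlib

open Matrix Finset

/-- Proposition propo5 (i): a spectrally nonnegative irreducible birth-and-death chain
is monotone: if `S(x,y) = π(x)·P(x,y)` is positive semidefinite, then
`p_x + q_{x+1} ≤ 1` for all `x < N`. -/
theorem stmt13 (N : ℕ) (hN : 1 ≤ N) (P : Matrix (Fin (N+1)) (Fin (N+1)) ℝ)
    (p q r : Fin (N+1) → ℝ) (π : Fin (N+1) → ℝ)
    (hP0 : ∀ x y, 0 ≤ P x y) (hP1 : ∀ x, ∑ y, P x y = 1)
    (htri : ∀ x y : Fin (N+1), ((x : ℕ) + 1 < (y : ℕ) ∨ (y : ℕ) + 1 < (x : ℕ)) → P x y = 0)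
    (hup : ∀ x : Fin (N+1), (x : ℕ) < N → P x (x + 1) = p x)
    (hdown : ∀ x : Fin (N+1), 0 < (x : ℕ) → P x (x - 1) = q x)
    (hdiag : ∀ x, P x x = r x)
    (hsum : ∀ x, p x + q x + r x = 1)
    (hq0 : q 0 = 0) (hpN : p (Fin.last N) = 0)
    (hppos : ∀ x : Fin (N+1), (x : ℕ) < N → 0 < p x)
    (hqpos : ∀ x : Fin (N+1), 0 < (x : ℕ) → 0 < q x)
    (hπpos : ∀ x, 0 < π x)
    (hdb : ∀ x y, π x * P x y = π y * P y x)
    (hpsd : (Matrix.of fun x y => π x * P x y).PosSemidef) :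
    ∀ x : Fin (N+1), (x : ℕ) < N → p x + q (x + 1) ≤ 1 := by
  intro x hx
  set y : Fin (N+1) := x + 1 with hy
  have hyval : (y : ℕ) = (x : ℕ) + 1 := by
    have : x < Fin.last N := by
      rw [Fin.lt_iff_val_lt_val]; simpa using hx
    simpa [hy] using Fin.val_add_one_of_lt this
  have hysub : y - 1 = x := by rw [hy]; exact add_sub_cancel_right x 1
  -- identify the matrix entries
  have hpx : P x y = p x := hup x hx
  have hqy : P y x = q y := by
    have := hdown y (by omega)
    rwa [hysub] at this
  have hrx : P x x = r x := hdiag x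
  have hry : P y y = r y := hdiag y
  -- nonnegativity facts
  have hpx0 : 0 ≤ p x := hpx ▸ hP0 x y
  have hqy0 : 0 ≤ q y := hqy ▸ hP0 y x
  have hrx0 : 0 ≤ r x := hrx ▸ hP0 x x
  have hry0 : 0 ≤ r y := hry ▸ hP0 y y
  have hqx0 : 0 ≤ q x := by
    rcases Nat.eq_zero_or_pos (x : ℕ) with h0 | h0
    · have : x = 0 := by exact Fin.ext (by simpa using h0)
      rw [this, hq0]
    · exact (hdown x h0) ▸ hP0 x (x - 1)
  have hpy0 : 0 ≤ p y := by
    rcases lt_or_ge (y : ℕ) N with h0 | h0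
    · exact (hup y h0) ▸ hP0 y (y + 1)
    · have : y = Fin.last N := Fin.ext (by simp [Fin.val_last]; omega)
      rw [this, hpN]
  -- quadratic form at vectors supported on {x, y}
  set S : Matrix (Fin (N+1)) (Fin (N+1)) ℝ := Matrix.of fun x y => π x * P x y with hS
  have hQ : ∀ t : ℝ, 0 ≤ S x x * (t * t) + (S x y + S y x) * t + S y y := by
    intro t
    have h := hpsd.dotProduct_mulVec_nonneg (Pi.single x t + Pi.single y 1)
    rw [star_trivial, Matrix.mulVec_add, dotProduct_add, add_dotProduct,
      add_dotProduct, Matrix.mulVec_single, Matrix.mulVec_single] at h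
    simp only [single_dotProduct] at h
    calc (0:ℝ) ≤ _ := h
    _ = S x x * (t * t) + (S x y + S y x) * t + S y y := by
      simp only [Pi.smul_apply, op_smul_eq_mul, Matrix.col_apply]; ring
  have hdisc := discrim_le_zero hQ
  rw [discrim] at hdisc
  have hSxx : S x x = π x * r x := by rw [hS]; simp [Matrix.of_apply, hrx]
  have hSyy : S y y = π y * r y := by rw [hS]; simp [Matrix.of_apply, hry]
  have hSxy : S x y = π x * p x := by rw [hS]; simp [Matrix.of_apply, hpx]
  have hSyx : S y x = π y * q y := by rw [hS]; simp [Matrix.of_apply, hqy]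
  have hsym : π x * p x = π y * q y := by rw [← hpx, ← hqy]; exact hdb x y
  rw [hSxx, hSyy, hSxy, hSyx, ← hsym] at hdisc
  have hπx := hπpos x
  have hπy := hπpos y
  -- deduce p x * q y ≤ r x * r y
  have key : p x * q y ≤ r x * r y := by
    have h2 : (π x * p x) * (π y * q y) ≤ (π x * r x) * (π y * r y) := by
      rw [← hsym]; nlinarith [hdisc]
    nlinarith [h2, mul_pos hπx hπy]
  have hsx := hsum x
  have hsy := hsum y
  nlinarith [key, mul_nonneg hqx0 hry0, mul_nonneg hpy0 hrx0]
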